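/- The 4×n grid graph has no spanning tree in which every vertex has degree 1 or 3, for any n ≥ 1. -/

import Mathlib

open Finset

-- one-sided handshake for "bipartite-like" S
lemma sum_degree_side {V : Type*} [Fintype V] [DecidableEq V] (G : SimpleGraph V)
    [DecidableRel G.Adj] (S : Finset V)
    (hS : ∀ v w, G.Adj v w → (v ∈ S ↔ w ∉ S)) :
    ∑ v ∈ S, G.degree v = G.edgeFinset.card := by
  classical
  simp only [SimpleGraph.degree]
  rw [← Finset.card_sigma]
  apply Finset.card_bij (fun p _ => s(p.1, p.2))
  · rintro ⟨v, w⟩ hp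
    simp only [Finset.mem_sigma, SimpleGraph.mem_neighborFinset] at hp
    simpa [SimpleGraph.mem_edgeFinset] using hp.2
  · rintro ⟨v, w⟩ hp ⟨v', w'⟩ hp' h
    simp only [Finset.mem_sigma, SimpleGraph.mem_neighborFinset] at hp hp'
    rw [Sym2.eq_iff] at h
    rcases h with h | h
    · simpa using h
    · exfalso
      simp only [Prod.swap, Prod.mk.injEq] at h
      obtain ⟨h1, h2⟩ := h
      have := hS v w hp.2
      have h3 := hp'.1
      rw [← h2] at h3
      exact (this.mp hp.1) h3
  · intro e he
    induction e with
    | _ a b =>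
      rw [SimpleGraph.mem_edgeFinset, SimpleGraph.mem_edgeSet] at he
      by_cases ha : a ∈ S
      · exact ⟨⟨a, b⟩, by simp [ha, he], rfl⟩
      · have hb : b ∈ S := by
          by_contra hb
          exact ha ((hS a b he).mpr hb)
        exact ⟨⟨b, a⟩, by simp [hb, he.symm], Sym2.eq_swap⟩

/-- The `m × n` grid graph: vertices differing by 1 in exactly one coordinate are adjacent. -/
def gridGraph (m n : ℕ) : SimpleGraph (Fin m × Fin n) :=
  SimpleGraph.fromRel (fun v w =>
    (v.1 = w.1 ∧ v.2.val + 1 = w.2.val) ∨ (v.2 = w.2 ∧ v.1.val + 1 = w.1.val))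

theorem stmt_10 (n : ℕ) (hn : 1 ≤ n) :
    ¬ ∃ T : SimpleGraph (Fin 4 × Fin n),
      T ≤ gridGraph 4 n ∧ T.IsTree ∧
        ∀ v, (T.neighborSet v).ncard = 1 ∨ (T.neighborSet v).ncard = 3 := by
  classical
  rintro ⟨T, hle, htree, hdeg⟩
  -- degrees
  have hdeg' : ∀ v, T.degree v = 1 ∨ T.degree v = 3 := by
    intro v
    have : (T.neighborSet v).ncard = T.degree v := by
      rw [Set.ncard_eq_toFinset_card']
      rfl
    rw [← this]; exact hdeg v
  -- parity class
  set S : Finset (Fin 4 × Fin n) :=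
    Finset.univ.filter (fun v => (v.1.val + v.2.val) % 2 = 0) with hSdef
  -- every edge crosses
  have hcross : ∀ v w, T.Adj v w → (v ∈ S ↔ w ∉ S) := by
    intro v w hvw
    have hg := hle hvw
    simp only [gridGraph, SimpleGraph.fromRel_adj] at hg
    have hpar : (v.1.val + v.2.val) % 2 ≠ (w.1.val + w.2.val) % 2 := by
      rcases hg.2 with (⟨h1, h2⟩ | ⟨h1, h2⟩) | (⟨h1, h2⟩ | ⟨h1, h2⟩) <;>
        simp only [Prod.ext_iff, Fin.ext_iff] at h1 ⊢ <;> omega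
    simp only [hSdef, Finset.mem_filter, Finset.mem_univ, true_and]
    omega
  have hsum := sum_degree_side T S hcross
  -- edge count
  have hE : T.edgeFinset.card + 1 = 4 * n := by
    have := htree.card_edgeFinset
    simpa [Fintype.card_prod] using this
  -- card S = 2n
  have hScard : S.card = 2 * n := by
    rw [Finset.card_eq_sum_card_fiberwise (f := Prod.snd) (t := Finset.univ)
      (fun x _ => Finset.mem_univ _)]
    have : ∀ j : Fin n, (S.filter (fun v => v.2 = j)).card = 2 := by
      intro j
      have himg : S.filter (fun v => v.2 = j) =
          (Finset.univ.filter (fun i : Fin 4 => (i.val + j.val) % 2 = 0)).image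
            (fun i => (i, j)) := by
        ext ⟨a, b⟩
        simp only [hSdef, Finset.mem_filter, Finset.mem_univ, true_and, Finset.mem_image]
        constructor
        · rintro ⟨h1, rfl⟩; exact ⟨a, h1, rfl⟩
        · rintro ⟨i, hi, h⟩
          obtain ⟨rfl, rfl⟩ := Prod.mk.injEq .. ▸ h
          exact ⟨hi, rfl⟩
      rw [himg, Finset.card_image_of_injective _ (fun a b h => (Prod.mk.injEq .. ▸ h).1)]
      rcases Nat.even_or_odd j.val with he | ho
      · have : (Finset.univ.filter (fun i : Fin 4 => (i.val + j.val) % 2 = 0)) =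
            (Finset.univ.filter (fun i : Fin 4 => i.val % 2 = 0)) := by
          apply Finset.filter_congr
          intro i _
          obtain ⟨k, hk⟩ := he
          omega
        rw [this]; decide
      · have : (Finset.univ.filter (fun i : Fin 4 => (i.val + j.val) % 2 = 0)) =
            (Finset.univ.filter (fun i : Fin 4 => i.val % 2 = 1)) := by
          apply Finset.filter_congr
          intro i _
          obtain ⟨k, hk⟩ := ho
          omega
        rw [this]; decide
    simp [this, Finset.sum_const, Finset.card_univ, mul_comm]
  -- parity contradiction
  have hmod : (∑ v ∈ S, T.degree v) % 2 = 0 := by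
    rw [Finset.sum_nat_mod]
    have : ∀ v ∈ S, T.degree v % 2 = 1 := by
      intro v _; rcases hdeg' v with h | h <;> simp [h]
    rw [Finset.sum_congr rfl this]
    simp [Finset.sum_const, hScard, Nat.mul_mod]
  omega
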